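/- Let $X \in \mathbb{R}^{n\times p}$ with $X^T X = I_p$, $E \in \mathbb{R}^{n\times p}$ with $X^T E$ skew-symmetric, $W = -(I_n - XX^T)E$, and $J = I_p + \frac{\tau^2}{4}W^T W + \frac{\tau}{2}X^T E$. Then the condition number of $J$ satisfies $\mathrm{cond}(J) \leq (5 + \upsilon^2)/4$ where $\upsilon = \tau \|E\|_F$. -/

import Mathlib

open Matrix

/-- Spectral norm of a real square matrix. -/
noncomputable def spec {p : ℕ} (A : Matrix (Fin p) (Fin p) ℝ) : ℝ :=
  ‖(Matrix.toEuclideanCLM (𝕜 := ℝ) A : EuclideanSpace ℝ (Fin p) →L[ℝ] EuclideanSpace ℝ (Fin p))‖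

/-- Frobenius norm of a real matrix. -/
noncomputable def frob {n p : ℕ} (A : Matrix (Fin n) (Fin p) ℝ) : ℝ :=
  Real.sqrt (Matrix.trace (Aᵀ * A))

section Aux
attribute [local instance] Matrix.frobeniusSeminormedAddCommGroup

lemma trace_eq {n p : ℕ} (A : Matrix (Fin n) (Fin p) ℝ) :
    Matrix.trace (Aᵀ * A) = ∑ i, ∑ j, A i j ^ 2 := by
  rw [Finset.sum_comm]
  simp [Matrix.trace, Matrix.mul_apply, Matrix.diag, sq]

lemma trace_nonneg' {n p : ℕ} (A : Matrix (Fin n) (Fin p) ℝ) :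
    0 ≤ Matrix.trace (Aᵀ * A) := by
  rw [trace_eq]; positivity

lemma frob_eq_norm {n p : ℕ} (A : Matrix (Fin n) (Fin p) ℝ) : frob A = ‖A‖ := by
  rw [frob, Matrix.frobenius_norm_def, trace_eq, Real.sqrt_eq_rpow]
  congr 1
  simp [Real.norm_eq_abs, Real.rpow_natCast, sq_abs]

lemma frob_nonneg {n p : ℕ} (A : Matrix (Fin n) (Fin p) ℝ) : 0 ≤ frob A :=
  Real.sqrt_nonneg _

lemma frob_sq {n p : ℕ} (A : Matrix (Fin n) (Fin p) ℝ) :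
    frob A ^ 2 = Matrix.trace (Aᵀ * A) :=
  Real.sq_sqrt (trace_nonneg' A)

lemma frob_transpose {n p : ℕ} (A : Matrix (Fin n) (Fin p) ℝ) : frob Aᵀ = frob A := by
  rw [frob_eq_norm, frob_eq_norm]; exact Matrix.frobenius_norm_transpose A

lemma frob_mul_le {n p q : ℕ} (A : Matrix (Fin n) (Fin p) ℝ) (B : Matrix (Fin p) (Fin q) ℝ) :
    frob (A * B) ≤ frob A * frob B := by
  rw [frob_eq_norm, frob_eq_norm, frob_eq_norm]; exact Matrix.frobenius_norm_mul A B

lemma spec_nonneg {p : ℕ} (A : Matrix (Fin p) (Fin p) ℝ) : 0 ≤ spec A := norm_nonneg _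

lemma spec_add_le {p : ℕ} (A B : Matrix (Fin p) (Fin p) ℝ) :
    spec (A + B) ≤ spec A + spec B := by
  unfold spec; rw [map_add]; exact norm_add_le _ _

lemma spec_smul {p : ℕ} (c : ℝ) (A : Matrix (Fin p) (Fin p) ℝ) :
    spec (c • A) = |c| * spec A := by
  unfold spec; rw [_root_.map_smul (toEuclideanCLM (𝕜 := ℝ)) c A, norm_smul, Real.norm_eq_abs]

lemma spec_one_le {p : ℕ} : spec (1 : Matrix (Fin p) (Fin p) ℝ) ≤ 1 := by
  unfold spec; rw [_root_.map_one]; exact ContinuousLinearMap.norm_id_le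

lemma clm_apply {p : ℕ} (A : Matrix (Fin p) (Fin p) ℝ) (x : EuclideanSpace ℝ (Fin p)) (i : Fin p) :
    (toEuclideanCLM (𝕜 := ℝ) A x) i = ∑ j, A i j * x j := rfl

lemma spec_le_frob {p : ℕ} (A : Matrix (Fin p) (Fin p) ℝ) : spec A ≤ frob A := by
  unfold spec
  apply ContinuousLinearMap.opNorm_le_bound _ (frob_nonneg A)
  intro x
  rw [EuclideanSpace.norm_eq, EuclideanSpace.norm_eq, frob,
    ← Real.sqrt_mul (trace_nonneg' A)]
  apply Real.sqrt_le_sqrt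
  rw [trace_eq, Finset.sum_mul]
  apply Finset.sum_le_sum
  intro i _
  rw [clm_apply]
  simp only [Real.norm_eq_abs, sq_abs]
  exact Finset.sum_mul_sq_le_sq_mul_sq Finset.univ (A i) (fun j => x j)

lemma dot_key {p : ℕ} (K : Matrix (Fin p) (Fin p) ℝ) (hK : Kᵀ = -K) (v : Fin p → ℝ) :
    v ⬝ᵥ (K *ᵥ v) = 0 := by
  have h : v ⬝ᵥ (K *ᵥ v) = (Kᵀ *ᵥ v) ⬝ᵥ v := by
    rw [Matrix.dotProduct_mulVec, ← Matrix.mulVec_transpose]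
  rw [hK, Matrix.neg_mulVec, neg_dotProduct] at h
  have h2 := dotProduct_comm (K *ᵥ v) v
  linarith

lemma dot_psd {n p : ℕ} (W : Matrix (Fin n) (Fin p) ℝ) (v : Fin p → ℝ) :
    0 ≤ v ⬝ᵥ ((Wᵀ * W) *ᵥ v) := by
  rw [← Matrix.mulVec_mulVec, Matrix.dotProduct_mulVec, Matrix.vecMul_transpose]
  exact Finset.sum_nonneg fun i _ => mul_self_nonneg _


/-- The condition number of `J` satisfies `cond(J) ≤ (5 + υ²)/4` with `υ = τ ‖E‖_F`. -/
theorem stmt_3 (n p : ℕ) (X E : Matrix (Fin n) (Fin p) ℝ)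
    (hX : Xᵀ * X = 1) (hskew : (Xᵀ * E)ᵀ = -(Xᵀ * E))
    (W : Matrix (Fin n) (Fin p) ℝ) (hW : W = -((1 - X * Xᵀ) * E))
    (τ : ℝ) (hτ : 0 ≤ τ)
    (J : Matrix (Fin p) (Fin p) ℝ)
    (hJ : J = 1 + (τ ^ 2 / 4) • (Wᵀ * W) + (τ / 2) • (Xᵀ * E))
    (υ : ℝ) (hυ : υ = τ * frob E) :
    spec J * spec J⁻¹ ≤ (5 + υ ^ 2) / 4 := by
  subst hυ
  -- dot product inequality
  have hdot : ∀ v : Fin p → ℝ, v ⬝ᵥ v ≤ v ⬝ᵥ (J *ᵥ v) := by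
    intro v
    rw [hJ, Matrix.add_mulVec, Matrix.add_mulVec, Matrix.one_mulVec,
      Matrix.smul_mulVec, Matrix.smul_mulVec,
      dotProduct_add, dotProduct_add,
      dotProduct_smul, dotProduct_smul,
      dot_key _ hskew v]
    have h1 := dot_psd W v
    simp only [smul_eq_mul, smul_zero]
    nlinarith [sq_nonneg τ]
  -- vector norm inequality
  have key : ∀ x : EuclideanSpace ℝ (Fin p), ‖x‖ ≤ ‖toEuclideanCLM (𝕜 := ℝ) J x‖ := by
    intro x
    rcases eq_or_lt_of_le (norm_nonneg x) with hx | hxpos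
    · rw [← hx]; exact norm_nonneg _
    set y := toEuclideanCLM (𝕜 := ℝ) J x with hy
    have e1 : (inner ℝ x x : ℝ) = (fun i => x i) ⬝ᵥ (fun i => x i) := by
      rw [real_inner_self_eq_norm_sq, EuclideanSpace.norm_eq, Real.sq_sqrt (by positivity)]
      simp only [Real.norm_eq_abs, sq_abs]; simp [dotProduct, sq]
    have e2 : (inner ℝ x y : ℝ) = (fun i => x i) ⬝ᵥ (J *ᵥ fun i => x i) := by
      simp [PiLp.inner_apply, dotProduct, Matrix.mulVec, hy, clm_apply, mul_comm]
    have h1 : ‖x‖ ^ 2 ≤ (inner ℝ x y : ℝ) := by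
      rw [← real_inner_self_eq_norm_sq, e1, e2]; exact hdot _
    have h2 : (inner ℝ x y : ℝ) ≤ ‖x‖ * ‖y‖ := real_inner_le_norm x y
    nlinarith
  -- invertibility
  have hdet : IsUnit J.det := by
    rw [isUnit_iff_ne_zero]
    intro h0
    obtain ⟨v, hv, hv0⟩ := (Matrix.exists_mulVec_eq_zero_iff).mpr h0
    set x : EuclideanSpace ℝ (Fin p) := (WithLp.equiv 2 _).symm v with hxdef
    have hx0 : toEuclideanCLM (𝕜 := ℝ) J x = 0 := by
      ext i
      rw [clm_apply]
      simpa [Matrix.mulVec, dotProduct, hxdef] using congrFun hv0 i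
    have hk := key x
    rw [hx0, norm_zero] at hk
    have h0 : x = 0 := norm_le_zero_iff.mp hk
    apply hv
    funext i
    exact congrFun (congrArg (fun z : EuclideanSpace ℝ (Fin p) =>
      (WithLp.equiv 2 (Fin p → ℝ)) z) h0) i
  have hJJ : J * J⁻¹ = 1 := Matrix.mul_nonsing_inv J hdet
  -- spec J⁻¹ ≤ 1
  have hinv : spec J⁻¹ ≤ 1 := by
    unfold spec
    apply ContinuousLinearMap.opNorm_le_bound _ zero_le_one
    intro y
    have hcomp : toEuclideanCLM (𝕜 := ℝ) J (toEuclideanCLM (𝕜 := ℝ) J⁻¹ y) = y := by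
      rw [← ContinuousLinearMap.mul_apply, ← _root_.map_mul, hJJ, _root_.map_one,
        ContinuousLinearMap.one_apply]
    calc ‖toEuclideanCLM (𝕜 := ℝ) J⁻¹ y‖
        ≤ ‖toEuclideanCLM (𝕜 := ℝ) J (toEuclideanCLM (𝕜 := ℝ) J⁻¹ y)‖ := key _
      _ = ‖y‖ := by rw [hcomp]
      _ = 1 * ‖y‖ := (one_mul _).symm
  -- Frobenius identity
  have hX' : ∀ B : Matrix (Fin p) (Fin p) ℝ, Xᵀ * (X * B) = B := fun B => by
    rw [← Matrix.mul_assoc, hX, one_mul]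
  have hWW : Wᵀ * W = Eᵀ * E - (Xᵀ * E)ᵀ * (Xᵀ * E) := by
    rw [hW]
    simp only [Matrix.transpose_neg, Matrix.transpose_mul, Matrix.transpose_sub,
      Matrix.transpose_one, Matrix.transpose_transpose, Matrix.neg_mul, Matrix.mul_neg, neg_neg]
    simp only [Matrix.sub_mul, Matrix.mul_sub, Matrix.one_mul, Matrix.mul_one,
      Matrix.mul_assoc, hX']
    abel
  have hfrob : frob W ^ 2 + frob (Xᵀ * E) ^ 2 = frob E ^ 2 := by
    rw [frob_sq, frob_sq, frob_sq, hWW, Matrix.trace_sub]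
    ring
  -- spec J bound
  set a := frob W
  set b := frob (Xᵀ * E)
  set c := frob E
  have ha : 0 ≤ a := frob_nonneg _
  have hb : 0 ≤ b := frob_nonneg _
  have hc : 0 ≤ c := frob_nonneg _
  have hspec : spec J ≤ 1 + τ ^ 2 / 4 * a ^ 2 + τ / 2 * b := by
    rw [hJ]
    calc spec (1 + (τ ^ 2 / 4) • (Wᵀ * W) + (τ / 2) • (Xᵀ * E))
        ≤ spec (1 + (τ ^ 2 / 4) • (Wᵀ * W)) + spec ((τ / 2) • (Xᵀ * E)) := spec_add_le _ _
      _ ≤ spec (1 : Matrix (Fin p) (Fin p) ℝ) + spec ((τ ^ 2 / 4) • (Wᵀ * W))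
            + spec ((τ / 2) • (Xᵀ * E)) := by gcongr ?_ + _; exact spec_add_le _ _
      _ ≤ 1 + τ ^ 2 / 4 * (a * a) + τ / 2 * b := by
          rw [spec_smul, spec_smul, abs_of_nonneg (by positivity : (0:ℝ) ≤ τ ^ 2 / 4),
            abs_of_nonneg (by positivity : (0:ℝ) ≤ τ / 2)]
          gcongr
          · exact spec_one_le
          · exact le_trans (spec_le_frob _) (le_trans (frob_mul_le _ _)
              (by rw [frob_transpose]))
          · exact spec_le_frob _
      _ = 1 + τ ^ 2 / 4 * a ^ 2 + τ / 2 * b := by ring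
  have hfinal : spec J ≤ (5 + (τ * c) ^ 2) / 4 := by
    nlinarith [sq_nonneg (1 - τ * b)]
  calc spec J * spec J⁻¹ ≤ spec J * 1 :=
        mul_le_mul_of_nonneg_left hinv (spec_nonneg J)
    _ = spec J := mul_one _
    _ ≤ (5 + (τ * c) ^ 2) / 4 := hfinal
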